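/- Let X be a d-partite simplicial complex such that every link of X (including the empty face's link, i.e. X itself) has a connected underlying graph. Then for every pair of distinct colors i, j ∈ [d], the bipartite graph induced between vertices of color i and vertices of color j (edges being the 1-faces of color {i,j}) is connected. -/

import Mathlib

open Finset

private theorem aux_partite {V : Type*} [DecidableEq V] {C : Type*} [DecidableEq C]
    (K : Finset C) :
    ∀ (faces : Finset (Finset V)) (col : V → C),
      (∀ s ∈ faces, ∀ t ⊆ s, t ∈ faces) →
      (∀ s ∈ faces, (s.image col).card = s.card) →
      (∀ s ∈ faces, ∃ r ∈ faces, s ⊆ r ∧ r.image col = K) →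
      (∀ s ∈ faces, ∀ a b : V, a ∉ s → b ∉ s → insert a s ∈ faces → insert b s ∈ faces →
        Relation.ReflTransGen
          (fun x y => x ∉ s ∧ y ∉ s ∧ x ≠ y ∧ insert x (insert y s) ∈ faces) a b) →
      ∀ (i j : C), i ≠ j → i ∈ K →
      ∀ a b : V, ({a} : Finset V) ∈ faces → ({b} : Finset V) ∈ faces →
      (col a = i ∨ col a = j) → (col b = i ∨ col b = j) →
      Relation.ReflTransGen
        (fun x y => ({x, y} : Finset V) ∈ faces ∧
          ((col x = i ∧ col y = j) ∨ (col x = j ∧ col y = i))) a b := by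
  induction K using Finset.strongInductionOn with
  | _ K ih =>
  intro faces col hdown hcolorful htop hlinkconn i j hij hiK a b ha hb hcola hcolb
  set R := fun x y => ({x, y} : Finset V) ∈ faces ∧
      ((col x = i ∧ col y = j) ∨ (col x = j ∧ col y = i)) with hR
  have step : ∀ x y : V, ({x, y} : Finset V) ∈ faces → x ≠ y →
      (col x = i ∨ col x = j) → (col y = i ∨ col y = j) → R x y := by
    intro x y hxy hne hcx hcy
    have hinj : Set.InjOn col ({x, y} : Finset V) :=
      Finset.card_image_iff.mp (hcolorful _ hxy)
    have hxyc : col x ≠ col y := fun h =>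
      hne (hinj (by simp) (by simp) h)
    rcases hcx with hx | hx <;> rcases hcy with hy | hy
    · exact absurd (hx.trans hy.symm) hxyc
    · exact ⟨hxy, Or.inl ⟨hx, hy⟩⟩
    · exact ⟨hxy, Or.inr ⟨hx, hy⟩⟩
    · exact absurd (hx.trans hy.symm) hxyc
  have claimC : ∀ v u w : V, ({u, v} : Finset V) ∈ faces → ({w, v} : Finset V) ∈ faces →
      (col u = i ∨ col u = j) → (col w = i ∨ col w = j) →
      Relation.ReflTransGen R u w := by
    intro v u w huv hwv hcu hcw
    by_cases hcv : col v = i ∨ col v = j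
    · have h1 : Relation.ReflTransGen R u v := by
        by_cases h : u = v
        · rw [h]
        · exact Relation.ReflTransGen.single (step u v huv h hcu hcv)
      have h2 : Relation.ReflTransGen R v w := by
        by_cases h : v = w
        · rw [h]
        · exact Relation.ReflTransGen.single
            (step v w (by rwa [Finset.pair_comm] at hwv) h hcv hcw)
      exact h1.trans h2
    · have hvu : u ≠ v := fun h => hcv (h ▸ hcu)
      have hvw : w ≠ v := fun h => hcv (h ▸ hcw)
      have hv : ({v} : Finset V) ∈ faces := hdown _ huv _ (by simp)
      obtain ⟨r0, hr0, hvr0, hr0K⟩ := htop _ hv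
      have hcolvK : col v ∈ K := hr0K ▸ Finset.mem_image_of_mem col (hvr0 (by simp))
      set faces' := faces.filter (fun t => v ∉ t ∧ insert v t ∈ faces) with hfaces'
      have hmem' : ∀ t, t ∈ faces' ↔ t ∈ faces ∧ v ∉ t ∧ insert v t ∈ faces := by
        intro t; simp [hfaces']
      have hdown' : ∀ s ∈ faces', ∀ t ⊆ s, t ∈ faces' := by
        intro s hs t hts
        rw [hmem'] at hs ⊢
        exact ⟨hdown _ hs.1 _ hts, fun hvt => hs.2.1 (hts hvt),
          hdown _ hs.2.2 _ (Finset.insert_subset_insert _ hts)⟩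
      have hcolorful' : ∀ s ∈ faces', (s.image col).card = s.card := by
        intro s hs; exact hcolorful _ ((hmem' s).1 hs).1
      have htop' : ∀ s ∈ faces', ∃ r ∈ faces', s ⊆ r ∧ r.image col = K.erase (col v) := by
        intro s hs
        rw [hmem'] at hs
        obtain ⟨r, hr, hsr, hrK⟩ := htop _ hs.2.2
        have hvr : v ∈ r := hsr (Finset.mem_insert_self _ _)
        have hinj : Set.InjOn col r := Finset.card_image_iff.mp (hcolorful _ hr)
        refine ⟨r.erase v, ?_, ?_, ?_⟩
        · rw [hmem']
          exact ⟨hdown _ hr _ (Finset.erase_subset _ _), Finset.notMem_erase _ _,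
            by rwa [Finset.insert_erase hvr]⟩
        · intro x hx
          exact Finset.mem_erase.mpr ⟨fun h => hs.2.1 (h ▸ hx),
            hsr (Finset.mem_insert_of_mem hx)⟩
        · ext c
          simp only [Finset.mem_image, Finset.mem_erase]
          constructor
          · rintro ⟨x, ⟨hxv, hxr⟩, rfl⟩
            refine ⟨fun h => hxv (hinj (by simpa using hxr) (by simpa using hvr) h), ?_⟩
            exact hrK ▸ Finset.mem_image_of_mem col hxr
          · rintro ⟨hcv', hcK⟩
            rw [← hrK] at hcK
            obtain ⟨x, hxr, rfl⟩ := Finset.mem_image.mp hcK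
            exact ⟨x, ⟨fun h => hcv' (by rw [h]), hxr⟩, rfl⟩
      have hlinkconn' : ∀ s ∈ faces', ∀ x y : V, x ∉ s → y ∉ s →
          insert x s ∈ faces' → insert y s ∈ faces' →
          Relation.ReflTransGen
            (fun x y => x ∉ s ∧ y ∉ s ∧ x ≠ y ∧ insert x (insert y s) ∈ faces') x y := by
        intro s hs x y hxs hys hx hy
        rw [hmem'] at hs hx hy
        have hxv : x ≠ v := fun h => hx.2.1 (h ▸ Finset.mem_insert_self x s)
        have hyv : y ≠ v := fun h => hy.2.1 (h ▸ Finset.mem_insert_self y s)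
        have hws := hlinkconn (insert v s) hs.2.2 x y
          (by simp [hxs, hxv]) (by simp [hys, hyv])
          (by rw [Finset.insert_comm]; exact hx.2.2) (by rw [Finset.insert_comm]; exact hy.2.2)
        refine Relation.ReflTransGen.mono ?_ _ _ hws
        rintro p q ⟨hp, hq, hpq, hface⟩
        have hpv : p ≠ v := fun h => hp (h ▸ Finset.mem_insert_self v s)
        have hqv : q ≠ v := fun h => hq (h ▸ Finset.mem_insert_self v s)
        refine ⟨fun h => hp (Finset.mem_insert_of_mem h),
          fun h => hq (Finset.mem_insert_of_mem h), hpq, ?_⟩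
        rw [hmem']
        refine ⟨hdown _ hface _ ?_, ?_, ?_⟩
        · exact Finset.insert_subset_insert _
            (Finset.insert_subset_insert _ (Finset.subset_insert _ _))
        · simp [Finset.mem_insert, Ne.symm hpv, Ne.symm hqv, hs.2.1]
        · rw [Finset.insert_comm v p, Finset.insert_comm v q]
          exact hface
      have hK' : K.erase (col v) ⊂ K := Finset.erase_ssubset hcolvK
      have hi' : i ∈ K.erase (col v) :=
        Finset.mem_erase.mpr ⟨fun h => hcv (Or.inl h.symm), hiK⟩
      have hu' : ({u} : Finset V) ∈ faces' := by
        rw [hmem']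
        refine ⟨hdown _ huv _ (by simp), by simp [Ne.symm hvu], ?_⟩
        rwa [Finset.pair_comm] at huv
      have hw' : ({w} : Finset V) ∈ faces' := by
        rw [hmem']
        refine ⟨hdown _ hwv _ (by simp), by simp [Ne.symm hvw], ?_⟩
        rwa [Finset.pair_comm] at hwv
      have hres := ih _ hK' faces' col hdown' hcolorful' htop' hlinkconn' i j hij hi'
        u w hu' hw' hcu hcw
      exact Relation.ReflTransGen.mono
        (fun x y hxy => ⟨((hmem' _).1 hxy.1).1, hxy.2⟩) _ _ hres
  have hempty : (∅ : Finset V) ∈ faces := hdown _ ha _ (Finset.empty_subset _)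
  have hwalk := hlinkconn ∅ hempty a b (Finset.notMem_empty a) (Finset.notMem_empty b)
    (by simpa using ha) (by simpa using hb)
  have key : ∀ v : V,
      Relation.ReflTransGen (fun x y => x ∉ (∅ : Finset V) ∧ y ∉ (∅ : Finset V) ∧ x ≠ y ∧
        insert x (insert y ∅) ∈ faces) v b →
      ∀ u : V, ({u, v} : Finset V) ∈ faces → (col u = i ∨ col u = j) →
      Relation.ReflTransGen R u b := by
    intro v hv
    induction hv using Relation.ReflTransGen.head_induction_on with
    | refl =>
      intro u hub hcu
      exact claimC b u b hub (by simpa using hb) hcu hcolb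
    | head hvw hwb ihw =>
      rename_i v' w
      intro u huv hcu
      obtain ⟨-, -, hvwne, hvwf⟩ := hvw
      have hvwface : ({v', w} : Finset V) ∈ faces := by simpa using hvwf
      obtain ⟨r, hr, hsub, hrK⟩ := htop _ hvwface
      have hir : i ∈ r.image col := hrK.symm ▸ hiK
      obtain ⟨u', hu'r, hcu'⟩ := Finset.mem_image.mp hir
      have huv' : ({u', v'} : Finset V) ∈ faces := by
        refine hdown _ hr _ ?_
        refine Finset.insert_subset hu'r (Finset.singleton_subset_iff.mpr ?_)
        exact hsub (by simp)
      have hu'w : ({u', w} : Finset V) ∈ faces := by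
        refine hdown _ hr _ ?_
        refine Finset.insert_subset hu'r (Finset.singleton_subset_iff.mpr ?_)
        exact hsub (by simp)
      have h1 : Relation.ReflTransGen R u u' := claimC v' u u' huv huv' hcu (Or.inl hcu')
      exact h1.trans (ihw u' hu'w (Or.inl hcu'))
  exact key a hwalk a (by simpa using ha) hcola


/-- **Color connectivity of partite complexes.** Let `X` be a `d`-partite simplicial complex
(coloring `col : V → Fin d`, injective on every face, every face contained in a top face of
size `d`) such that the underlying graph of every link (including that of the empty face,
i.e. of `X` itself) is connected. Then for every pair of distinct colors `i ≠ j`, the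
bipartite graph induced between the vertices of color `i` and the vertices of color `j`
(edges being the `1`-faces of color `{i,j}`) is connected. -/
theorem partite_color_connectivity {V : Type*} [DecidableEq V] (d : ℕ)
    (faces : Finset (Finset V))
    (hdown : ∀ s ∈ faces, ∀ t ⊆ s, t ∈ faces)
    (hempty : (∅ : Finset V) ∈ faces)
    (col : V → Fin d)
    (hcolorful : ∀ s ∈ faces, (s.image col).card = s.card)
    (htop : ∀ s ∈ faces, ∃ r ∈ faces, s ⊆ r ∧ r.card = d)
    (hlinkconn : ∀ s ∈ faces, ∀ a b : V, a ∉ s → b ∉ s →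
      insert a s ∈ faces → insert b s ∈ faces →
      Relation.ReflTransGen
        (fun x y => x ∉ s ∧ y ∉ s ∧ x ≠ y ∧ insert x (insert y s) ∈ faces) a b)
    (i j : Fin d) (hij : i ≠ j)
    (a b : V) (ha : ({a} : Finset V) ∈ faces) (hb : ({b} : Finset V) ∈ faces)
    (hcola : col a = i ∨ col a = j) (hcolb : col b = i ∨ col b = j) :
    Relation.ReflTransGen
      (fun x y => ({x, y} : Finset V) ∈ faces ∧
        ((col x = i ∧ col y = j) ∨ (col x = j ∧ col y = i))) a b := by
  classical
  have htop' : ∀ s ∈ faces, ∃ r ∈ faces, s ⊆ r ∧ r.image col = Finset.univ := by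
    intro s hs
    obtain ⟨r, hr, hsr, hcard⟩ := htop s hs
    refine ⟨r, hr, hsr, Finset.eq_univ_of_card _ ?_⟩
    rw [hcolorful _ hr, hcard, Fintype.card_fin]
  exact aux_partite Finset.univ faces col hdown hcolorful htop' hlinkconn i j hij
    (Finset.mem_univ i) a b ha hb hcola hcolb
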